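/- Let C be a 4×4 symmetric matrix of the form [[A,0,0,γ],[0,B,δ,0],[0,δ,C',0],[γ,0,0,D]] and let A' = diag(α₁, α₂), B' = diag(β₁, β₂) be 2×2 diagonal matrices. Set ā = α₁+β₁−A, b̄ = α₁+β₂−B, c̄ = α₂+β₁−C', d̄ = α₂+β₂−D. Then A'⊗I + I⊗B' ≤ C (as symmetric matrices on ℝ²⊗ℝ² ≅ ℝ⁴) if and only if ā + d̄ ≤ −√((ā−d̄)² + 4γ²) and b̄ + c̄ ≤ −√((b̄−c̄)² + 4δ²). -/

import Mathlib

lemma quad_key (p q g : ℝ) :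
    (∀ x y : ℝ, 0 ≤ p * x ^ 2 + 2 * g * x * y + q * y ^ 2) ↔
      Real.sqrt ((p - q) ^ 2 + 4 * g ^ 2) ≤ p + q := by
  constructor
  · intro h
    have hp : 0 ≤ p := by have := h 1 0; nlinarith
    have hq : 0 ≤ q := by have := h 0 1; nlinarith
    have hd : discrim p (2 * g) q ≤ 0 :=
      discrim_le_zero fun x => by have := h x 1; nlinarith
    rw [discrim] at hd
    have h1 : (p - q) ^ 2 + 4 * g ^ 2 ≤ (p + q) ^ 2 := by nlinarith
    calc Real.sqrt ((p - q) ^ 2 + 4 * g ^ 2) ≤ Real.sqrt ((p + q) ^ 2) :=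
          Real.sqrt_le_sqrt h1
      _ = p + q := Real.sqrt_sq (by linarith)
  · intro h x y
    have h0 : 0 ≤ p + q := le_trans (Real.sqrt_nonneg _) h
    have h1 : (p - q) ^ 2 + 4 * g ^ 2 ≤ (p + q) ^ 2 := by
      have hs := Real.sq_sqrt (by positivity : (0:ℝ) ≤ (p - q) ^ 2 + 4 * g ^ 2)
      nlinarith [Real.sqrt_nonneg ((p - q) ^ 2 + 4 * g ^ 2)]
    have hg : g ^ 2 ≤ p * q := by nlinarith
    have hp : 0 ≤ p := by nlinarith [sq_nonneg g]
    rcases eq_or_lt_of_le hp with h' | h'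
    · have hg0 : g = 0 := by nlinarith [sq_nonneg g]
      have hq : 0 ≤ q := by linarith
      rw [hg0, ← h']
      nlinarith [mul_nonneg hq (sq_nonneg y)]
    · nlinarith [sq_nonneg (p * x + g * y), mul_nonneg (sub_nonneg.2 hg) (sq_nonneg y)]

theorem tensor_duality_constraint (A B C' D γ δ α₁ α₂ β₁ β₂ : ℝ) :
    let Cm : Matrix (Fin 4) (Fin 4) ℝ :=
      !![A, 0, 0, γ; 0, B, δ, 0; 0, δ, C', 0; γ, 0, 0, D]
    -- A'⊗I + I⊗B' in the basis e₁⊗e₁, e₁⊗e₂, e₂⊗e₁, e₂⊗e₂,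
    -- with A' = diag(α₁, α₂) and B' = diag(β₁, β₂):
    let T : Matrix (Fin 4) (Fin 4) ℝ :=
      Matrix.diagonal ![α₁ + β₁, α₁ + β₂, α₂ + β₁, α₂ + β₂]
    let abar := α₁ + β₁ - A
    let bbar := α₁ + β₂ - B
    let cbar := α₂ + β₁ - C'
    let dbar := α₂ + β₂ - D
    ((Cm - T).PosSemidef ↔
      abar + dbar ≤ -Real.sqrt ((abar - dbar) ^ 2 + 4 * γ ^ 2) ∧
        bbar + cbar ≤ -Real.sqrt ((bbar - cbar) ^ 2 + 4 * δ ^ 2)) := by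
  intro Cm T abar bbar cbar dbar
  have hform : ∀ x : Fin 4 → ℝ, dotProduct (star x) (Matrix.mulVec (Cm - T) x) =
      ((-abar) * (x 0) ^ 2 + 2 * γ * (x 0) * (x 3) + (-dbar) * (x 3) ^ 2) +
      ((-bbar) * (x 1) ^ 2 + 2 * δ * (x 1) * (x 2) + (-cbar) * (x 2) ^ 2) := by
    intro x
    simp [Cm, T, abar, bbar, cbar, dbar, dotProduct, Matrix.mulVec,
      Fin.sum_univ_four, Matrix.sub_apply, Matrix.diagonal]
    ring
  have key1 : (∀ x y : ℝ, 0 ≤ (-abar) * x ^ 2 + 2 * γ * x * y + (-dbar) * y ^ 2) ↔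
      abar + dbar ≤ -Real.sqrt ((abar - dbar) ^ 2 + 4 * γ ^ 2) := by
    rw [quad_key]
    have : (-abar - -dbar) ^ 2 = (abar - dbar) ^ 2 := by ring
    rw [this]
    constructor <;> intro h <;> linarith
  have key2 : (∀ x y : ℝ, 0 ≤ (-bbar) * x ^ 2 + 2 * δ * x * y + (-cbar) * y ^ 2) ↔
      bbar + cbar ≤ -Real.sqrt ((bbar - cbar) ^ 2 + 4 * δ ^ 2) := by
    rw [quad_key]
    have : (-bbar - -cbar) ^ 2 = (bbar - cbar) ^ 2 := by ring
    rw [this]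
    constructor <;> intro h <;> linarith
  rw [Matrix.posSemidef_iff_dotProduct_mulVec]
  constructor
  · rintro ⟨_, hpos⟩
    constructor
    · rw [← key1]
      intro x y
      have := hpos ![x, 0, 0, y]
      rw [hform] at this
      simpa using this
    · rw [← key2]
      intro x y
      have := hpos ![0, x, y, 0]
      rw [hform] at this
      simpa using this
  · rintro ⟨h1, h2⟩
    constructor
    · apply Matrix.IsHermitian.sub
      · show Matrix.conjTranspose Cm = Cm
        ext i j
        fin_cases i <;> fin_cases j <;> simp [Cm, Matrix.conjTranspose_apply]
      · exact Matrix.isHermitian_diagonal _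
    · intro x
      rw [hform]
      have := (key1.2 h1) (x 0) (x 3)
      have := (key2.2 h2) (x 1) (x 2)
      linarith
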